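/- arXiv:1801.08181 — 2 statements merged into one kernel-verified Lean document; each statement's English description precedes it below -/
import Mathlib

section
/- Let U ≥ 1, K ≥ 1, M ≥ 1 and 1 ≤ n ≤ M be natural numbers, and let R > 0, η > 0, α > 0, ε_n > 0, a_n > 0 be real. For 1 ≤ u ≤ U set θ_u = cos((2u−1)π/(2U)), b_u = (π/(2U))·√(1−θ_u²)·(θ_u+1), c_u = 1 + ((R/2)·(θ_u+1))^α. For ρ > 0 define β(ρ) = ε_n/(ρ·a_n) and P(ρ) = (M!/((M−n)!·n!)) · ( Σ_{u=1}^U (b_u/K!) · (β(ρ)·c_u/η)^K )^n. Then P(ρ) > 0 for all ρ > 0, and lim_{ρ→∞} ( − log P(ρ) / log ρ ) = n·K. -/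
open Real Filter Finset

/-- Perfect-SIC part of Remark 2 of the paper: the asymptotic high-SNR outage probability of
the `n`-th user with perfect SIC for CD-NOMA,
`P(ρ) = (M!/((M-n)! n!)) (∑_{u=1}^U (b_u/K!) (β(ρ) c_u/η)^K)^n`, is positive for all
`ρ > 0` and satisfies `-log P(ρ)/log ρ → n K`, i.e. the diversity order is `n K`. -/
theorem diversity_order_n_user_pSIC
    (U K M n : ℕ) (hU : 1 ≤ U) (hK : 1 ≤ K) (hM : 1 ≤ M) (hn1 : 1 ≤ n) (hnM : n ≤ M)
    (R η α εn an : ℝ) (hR : 0 < R) (hη : 0 < η) (hα : 0 < α) (hεn : 0 < εn) (han : 0 < an)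
    (θ b c : ℕ → ℝ)
    (hθ : ∀ u, θ u = Real.cos ((2 * (u : ℝ) - 1) * Real.pi / (2 * (U : ℝ))))
    (hb : ∀ u, b u = Real.pi / (2 * (U : ℝ)) * Real.sqrt (1 - θ u ^ 2) * (θ u + 1))
    (hc : ∀ u, c u = 1 + (R / 2 * (θ u + 1)) ^ α)
    (β P : ℝ → ℝ)
    (hβ : ∀ ρ, β ρ = εn / (ρ * an))
    (hP : ∀ ρ, P ρ
      = ((Nat.factorial M : ℝ) / ((Nat.factorial (M - n) : ℝ) * (Nat.factorial n : ℝ))) *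
        (∑ u ∈ Finset.Icc 1 U, b u / (Nat.factorial K : ℝ) * (β ρ * c u / η) ^ K) ^ n) :
    (∀ ρ > 0, 0 < P ρ) ∧
    Filter.Tendsto (fun ρ => - Real.log (P ρ) / Real.log ρ) Filter.atTop
      (nhds ((n : ℝ) * (K : ℝ))) := by
  have hU0 : (0:ℝ) < (U:ℝ) := by exact_mod_cast hU
  -- positivity of b u on the index set
  have hbpos : ∀ u ∈ Finset.Icc 1 U, 0 < b u := by
    intro u hu
    rw [Finset.mem_Icc] at hu
    set x := (2 * (u : ℝ) - 1) * Real.pi / (2 * (U : ℝ)) with hxdef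
    have hu1 : (1:ℝ) ≤ (u:ℝ) := by exact_mod_cast hu.1
    have huU : (u:ℝ) ≤ (U:ℝ) := by exact_mod_cast hu.2
    have hx0 : 0 < x := by
      apply div_pos
      · have : (0:ℝ) < 2 * (u:ℝ) - 1 := by linarith
        positivity
      · positivity
    have hxpi : x < Real.pi := by
      rw [hxdef, div_lt_iff₀ (by positivity)]
      have := Real.pi_pos
      nlinarith
    have hsin : 0 < Real.sin x := Real.sin_pos_of_pos_of_lt_pi hx0 hxpi
    have hθu : θ u = Real.cos x := hθ u
    have hid := Real.sin_sq_add_cos_sq x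
    have hcos2 : (θ u) ^ 2 < 1 := by rw [hθu]; nlinarith
    have hθ1 : 0 < θ u + 1 := by nlinarith
    rw [hb u]
    have hs : 0 < Real.sqrt (1 - θ u ^ 2) := Real.sqrt_pos.mpr (by linarith)
    have := Real.pi_pos
    positivity
  -- positivity of c u (for all u)
  have hcpos : ∀ u, 0 < c u := by
    intro u
    rw [hc u]
    have h1 : -1 ≤ θ u := by rw [hθ u]; exact Real.neg_one_le_cos _
    have hbase : (0:ℝ) ≤ R / 2 * (θ u + 1) := by nlinarith
    have := Real.rpow_nonneg hbase α
    linarith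
  set C : ℝ := (Nat.factorial M : ℝ) / ((Nat.factorial (M - n) : ℝ) * (Nat.factorial n : ℝ))
    with hCdef
  have hC : 0 < C := by
    apply div_pos
    · exact_mod_cast Nat.factorial_pos M
    · exact mul_pos (by exact_mod_cast Nat.factorial_pos (M - n))
        (by exact_mod_cast Nat.factorial_pos n)
  set S : ℝ := ∑ u ∈ Finset.Icc 1 U, b u / (Nat.factorial K : ℝ) * (εn * c u / (an * η)) ^ K
    with hSdef
  have hS : 0 < S := by
    apply Finset.sum_pos
    · intro u hu
      have hb' := hbpos u hu
      have hc' := hcpos u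
      have hKf : (0:ℝ) < (Nat.factorial K : ℝ) := by exact_mod_cast Nat.factorial_pos K
      positivity
    · exact ⟨1, Finset.mem_Icc.mpr ⟨le_refl 1, hU⟩⟩
  set A : ℝ := C * S ^ n with hAdef
  have hA : 0 < A := mul_pos hC (pow_pos hS n)
  -- key identity
  have hPA : ∀ ρ : ℝ, 0 < ρ → P ρ = A * (ρ⁻¹) ^ (K * n) := by
    intro ρ hρ
    rw [hP ρ]
    have hsum : (∑ u ∈ Finset.Icc 1 U, b u / (Nat.factorial K : ℝ) * (β ρ * c u / η) ^ K)
        = (ρ⁻¹) ^ K * S := by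
      rw [hSdef, Finset.mul_sum]
      apply Finset.sum_congr rfl
      intro u _
      rw [hβ]
      have : εn / (ρ * an) * c u / η = ρ⁻¹ * (εn * c u / (an * η)) := by
        field_simp
      rw [this, mul_pow]
      ring
    rw [hsum, hAdef, mul_pow, ← pow_mul]
    ring
  have hPpos : ∀ ρ > 0, 0 < P ρ := by
    intro ρ hρ
    rw [hPA ρ hρ]
    positivity
  refine ⟨hPpos, ?_⟩
  have heq : ∀ᶠ ρ : ℝ in atTop,
      (n : ℝ) * (K : ℝ) - Real.log A / Real.log ρ = - Real.log (P ρ) / Real.log ρ := by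
    filter_upwards [eventually_gt_atTop (1:ℝ)] with ρ hρ
    have hρ0 : 0 < ρ := by linarith
    have hlρ : 0 < Real.log ρ := Real.log_pos hρ
    have hlogP : Real.log (P ρ) = Real.log A - (K * n : ℕ) * Real.log ρ := by
      rw [hPA ρ hρ0, Real.log_mul (ne_of_gt hA) (by positivity), Real.log_pow,
        Real.log_inv]
      ring
    rw [hlogP, neg_sub, sub_div, mul_div_assoc, div_self hlρ.ne', mul_one]
    push_cast
    ring
  apply Filter.Tendsto.congr' heq
  have h1 : Filter.Tendsto (fun ρ : ℝ => Real.log A / Real.log ρ) atTop (nhds 0) :=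
    Filter.Tendsto.div_atTop tendsto_const_nhds Real.tendsto_log_atTop
  have := (tendsto_const_nhds (α := ℝ) (x := (n : ℝ) * (K : ℝ)) (f := atTop)).sub h1
  simpa using this
end

section
/- Adopt the setup: R > 0, η > 0, α > 0, ε_m > 0, a_m > 0, a_n > 0 real with a_m > ε_m·a_n, and K ≥ 1, M ≥ 1, 1 ≤ m ≤ M natural numbers. For each ρ > 0, let (r_1, Y_1), …, (r_M, Y_M) be i.i.d. pairs with r_j of density 2s/R² on [0,R] and Y_j Erlang(K) independent of r_j; set Z_j = η·Y_j/(1 + r_j^α), let Z_(m) be the m-th smallest among Z_1,…,Z_M, and let P(ρ) = P( ρ·Z_(m)·a_m/(ρ·Z_(m)·a_n + 1) ≤ ε_m ). Then lim_{ρ→∞} ρ^{mK} · P(ρ) = (M!/((M−m)!·m!)) · ( (2/R²) · ∫_0^R ( ((1+s^α)·ε_m / (η·(a_m − ε_m·a_n)))^K / K! ) · s ds )^m. -/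
open MeasureTheory ProbabilityTheory Real
open scoped ENNReal

/-- The `m`-th smallest value (1-indexed) among `v 0, …, v (M-1)`. -/
noncomputable def orderStat {M : ℕ} (v : Fin M → ℝ) (m : ℕ) : ℝ :=
  ((List.ofFn v).mergeSort (fun a b => a ≤ b)).getD (m - 1) 0

lemma countP_eq_sum_map' {α : Type*} (p : α → Bool) (l : List α) :
    l.countP p = (l.map (fun a => if p a then 1 else 0)).sum := by
  induction l with
  | nil => simp
  | cons a l ih =>
    rw [List.countP_cons, List.map_cons, List.sum_cons, ih]
    by_cases h : p a <;> simp [h] <;> omega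

lemma countP_ofFn_eq_card {M : ℕ} (v : Fin M → ℝ) (t : ℝ) :
    (List.ofFn v).countP (fun a => decide (a ≤ t)) =
      (Finset.univ.filter (fun j => v j ≤ t)).card := by
  rw [List.ofFn_eq_map, List.countP_map]
  rw [Finset.card_filter, countP_eq_sum_map', Fin.sum_univ_def]
  congr 1
  apply List.map_congr_left
  intro a _
  by_cases h : v a ≤ t <;> simp [h]

lemma sorted_getElem_le_iff {l : List ℝ} (hs : List.Pairwise (fun a b : ℝ => a ≤ b) l)
    {k : ℕ} (hk : k < l.length) (t : ℝ) :
    l[k] ≤ t ↔ k < l.countP (fun a => decide (a ≤ t)) := by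
  have hpg := List.pairwise_iff_getElem.1 hs
  constructor
  · intro h
    have hsplit : l.countP (fun a => decide (a ≤ t)) =
        (l.take (k+1)).countP (fun a => decide (a ≤ t)) +
        (l.drop (k+1)).countP (fun a => decide (a ≤ t)) := by
      conv_lhs => rw [← List.take_append_drop (k+1) l]
      rw [List.countP_append]
    have hlen : (l.take (k+1)).length = k + 1 := by
      rw [List.length_take]; omega
    have htake : (l.take (k+1)).countP (fun a => decide (a ≤ t))
        = (l.take (k+1)).length := by
      rw [List.countP_eq_length]
      intro a ha
      obtain ⟨i, hi, rfl⟩ := List.mem_iff_getElem.1 ha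
      have hi' : i < k + 1 := by rw [List.length_take] at hi; omega
      have hil : i < l.length := by omega
      rw [List.getElem_take]
      have hle : l[i] ≤ l[k] := by
        rcases Nat.lt_or_ge i k with h' | h'
        · exact hpg i k hil hk h'
        · have : i = k := by omega
          subst this; exact le_rfl
      simpa using hle.trans h
    omega
  · intro h
    by_contra hlt
    push_neg at hlt
    have hdrop : (l.drop k).countP (fun a => decide (a ≤ t)) = 0 := by
      rw [List.countP_eq_zero]
      intro a ha
      obtain ⟨i, hi, rfl⟩ := List.mem_iff_getElem.1 ha
      rw [List.getElem_drop]
      have hki : k + i < l.length := by rw [List.length_drop] at hi; omega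
      have hgk : l[k] ≤ l[k+i] := by
        rcases Nat.eq_zero_or_pos i with rfl | hpos
        · simp
        · exact hpg k (k+i) hk hki (by omega)
      simp only [decide_eq_true_eq]
      intro hc
      exact absurd (hgk.trans hc) (not_le.2 hlt)
    have hsplit : l.countP (fun a => decide (a ≤ t)) =
        (l.take k).countP (fun a => decide (a ≤ t)) +
        (l.drop k).countP (fun a => decide (a ≤ t)) := by
      conv_lhs => rw [← List.take_append_drop k l]
      rw [List.countP_append]
    have hle : (l.take k).countP (fun a => decide (a ≤ t)) ≤ k := by
      calc (l.take k).countP _ ≤ (l.take k).length := List.countP_le_length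
      _ ≤ k := by rw [List.length_take]; omega
    omega

lemma orderStat_le_iff {M : ℕ} (v : Fin M → ℝ) {m : ℕ} (hm1 : 1 ≤ m) (hmM : m ≤ M) (t : ℝ) :
    orderStat v m ≤ t ↔ m ≤ (Finset.univ.filter (fun j => v j ≤ t)).card := by
  have hperm : List.Perm ((List.ofFn v).mergeSort (fun a b => a ≤ b)) (List.ofFn v) :=
    List.mergeSort_perm _ _
  set l := (List.ofFn v).mergeSort (fun a b => a ≤ b) with hl
  have hlen : l.length = M := by rw [hperm.length_eq, List.length_ofFn]
  have hk : m - 1 < l.length := by omega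
  have hsorted : List.Pairwise (fun a b : ℝ => a ≤ b) l := by
    have h := List.pairwise_mergeSort (α := ℝ) (le := fun a b => a ≤ b)
      (fun a b c hab hbc => by
        simp only [decide_eq_true_eq] at *; exact le_trans hab hbc)
      (fun a b => by simp [le_total]) (List.ofFn v)
    rw [← hl] at h
    exact h.imp (fun h' => by simpa using h')
  have hval : orderStat v m = l[m-1] := by
    rw [orderStat, ← hl]
    exact List.getD_eq_getElem l 0 hk
  rw [hval, sorted_getElem_le_iff hsorted hk, hperm.countP_eq, countP_ofFn_eq_card]
  omega

lemma orderStat_mem {M : ℕ} (v : Fin M → ℝ) {m : ℕ} (hm1 : 1 ≤ m) (hmM : m ≤ M) :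
    orderStat v m ∈ Set.range v := by
  have hperm : List.Perm ((List.ofFn v).mergeSort (fun a b => a ≤ b)) (List.ofFn v) :=
    List.mergeSort_perm _ _
  set l := (List.ofFn v).mergeSort (fun a b => a ≤ b) with hl
  have hlen : l.length = M := by rw [hperm.length_eq, List.length_ofFn]
  have hk : m - 1 < l.length := by omega
  have hval : orderStat v m = l[m-1] := by
    rw [orderStat, ← hl]
    exact List.getD_eq_getElem l 0 hk
  rw [hval, ← List.mem_ofFn']
  exact hperm.mem_iff.1 (List.getElem_mem hk)

lemma lintegral_Icc_pow_div (y : ℝ) (hy : 0 ≤ y) (n : ℕ) (c : ℝ) (hc : 0 ≤ c) :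
    ∫⁻ b in Set.Icc (0:ℝ) y, ENNReal.ofReal (c * ((y - b)^n / n.factorial)) ∂volume
      = ENNReal.ofReal (c * (y^(n+1) / (n+1).factorial)) := by
  have hcont : Continuous (fun b : ℝ => c * ((y - b)^n / n.factorial)) := by
    continuity
  have hint : IntegrableOn (fun b : ℝ => c * ((y - b)^n / n.factorial)) (Set.Icc 0 y) :=
    hcont.integrableOn_Icc
  have hae : 0 ≤ᶠ[ae (volume.restrict (Set.Icc (0:ℝ) y))]
      (fun b : ℝ => c * ((y - b)^n / n.factorial)) := by
    refine (ae_restrict_iff' measurableSet_Icc).2 (ae_of_all _ fun b hb => ?_)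
    have : (0:ℝ) ≤ (y - b)^n := pow_nonneg (by linarith [hb.2]) n
    have hfac : (0:ℝ) ≤ (n.factorial : ℝ) := Nat.cast_nonneg _
    positivity
  rw [← MeasureTheory.ofReal_integral_eq_lintegral_ofReal hint hae]
  congr 1
  rw [MeasureTheory.integral_Icc_eq_integral_Ioc, ← intervalIntegral.integral_of_le hy]
  have h1 : ∫ b in (0:ℝ)..y, c * ((y - b)^n / n.factorial)
      = c * ((∫ b in (0:ℝ)..y, (y - b)^n) / n.factorial) := by
    rw [← intervalIntegral.integral_div, ← intervalIntegral.integral_const_mul]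
  rw [h1, intervalIntegral.integral_comp_sub_left (fun x => x ^ n) y]
  simp only [sub_zero, sub_self, integral_pow, zero_pow, ne_eq, Nat.succ_ne_zero,
    not_false_eq_true]
  rw [Nat.factorial_succ]
  push_cast
  field_simp

lemma erlang_cdf_bounds {Ω : Type*} [MeasurableSpace Ω] (μ : Measure Ω) [IsProbabilityMeasure μ]
    {K : ℕ} (E : Fin K → Ω → ℝ) (hmeas : ∀ i, Measurable (E i))
    (hindep : iIndepFun E μ)
    (hlaw : ∀ i, Measure.map (E i) μ = expMeasure 1) :
    ∀ n, n ≤ K → ∀ y : ℝ,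
      (y < 0 → μ {ω | ∑ i ∈ Finset.univ.filter (fun i : Fin K => (i:ℕ) < n), E i ω ≤ y} = 0) ∧
      (0 ≤ y → ENNReal.ofReal (Real.exp (-y) * (y^n / n.factorial))
          ≤ μ {ω | ∑ i ∈ Finset.univ.filter (fun i : Fin K => (i:ℕ) < n), E i ω ≤ y} ∧
        μ {ω | ∑ i ∈ Finset.univ.filter (fun i : Fin K => (i:ℕ) < n), E i ω ≤ y}
          ≤ ENNReal.ofReal (y^n / n.factorial)) := by
  intro n
  induction n with
  | zero =>
    intro _ y
    have hempty : (Finset.univ.filter (fun i : Fin K => (i:ℕ) < 0)) = ∅ := by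
      ext i; simp
    constructor
    · intro hy
      have : {ω : Ω | ∑ i ∈ Finset.univ.filter (fun i : Fin K => (i:ℕ) < 0), E i ω ≤ y} = ∅ := by
        ext ω; simp [hempty]; linarith
      rw [this]; simp
    · intro hy
      have : {ω : Ω | ∑ i ∈ Finset.univ.filter (fun i : Fin K => (i:ℕ) < 0), E i ω ≤ y} = Set.univ := by
        ext ω; simp [hempty]; linarith
      rw [this]
      simp only [measure_univ]
      constructor
      · calc ENNReal.ofReal (Real.exp (-y) * (y^0 / Nat.factorial 0)) ≤ ENNReal.ofReal 1 := by
              apply ENNReal.ofReal_le_ofReal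
              simp only [pow_zero, Nat.factorial_zero, Nat.cast_one, div_one, mul_one]
              exact exp_le_one_iff.2 (by linarith)
        _ = 1 := ENNReal.ofReal_one
      · simp [ENNReal.ofReal_one]
  | succ n ih =>
    intro hn y
    have hnK : n ≤ K := by omega
    have hnlt : n < K := by omega
    set j : Fin K := ⟨n, hnlt⟩ with hj
    set X : Ω → ℝ := fun ω => ∑ i ∈ Finset.univ.filter (fun i : Fin K => (i:ℕ) < n), E i ω with hX
    have hXmeas : Measurable X := Finset.measurable_sum _ (fun i _ => hmeas i)
    set W : Ω → ℝ := E j with hW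
    have hWmeas : Measurable W := hmeas j
    have hsetS : ∀ c : ℝ, (μ.map X) (Set.Iic c)
        = μ {ω | ∑ i ∈ Finset.univ.filter (fun i : Fin K => (i:ℕ) < n), E i ω ≤ c} := by
      intro c
      rw [Measure.map_apply hXmeas measurableSet_Iic]
      rfl
    have hins : (Finset.univ.filter (fun i : Fin K => (i:ℕ) < n + 1))
        = insert j (Finset.univ.filter (fun i : Fin K => (i:ℕ) < n)) := by
      ext i
      simp only [Finset.mem_filter, Finset.mem_univ, true_and, Finset.mem_insert, Fin.ext_iff, hj]
      omega
    have hjnot : j ∉ Finset.univ.filter (fun i : Fin K => (i:ℕ) < n) := by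
      simp [hj]
    have hsum : ∀ ω, ∑ i ∈ Finset.univ.filter (fun i : Fin K => (i:ℕ) < n + 1), E i ω
        = X ω + W ω := by
      intro ω
      rw [hins, Finset.sum_insert hjnot]
      ring
    have hWX : IndepFun W X μ := by
      have h := hindep.indepFun_finset_sum_of_notMem hmeas hjnot
      have h2 : (∑ i ∈ Finset.univ.filter (fun i : Fin K => (i:ℕ) < n), E i) = X := by
        funext ω; rw [hX]; simp [Finset.sum_apply]
      rw [h2] at h
      exact h.symm
    have hmap : Measure.map (fun ω => (W ω, X ω)) μ = (μ.map W).prod (μ.map X) :=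
      (indepFun_iff_map_prod_eq_prod_map_map hWmeas.aemeasurable hXmeas.aemeasurable).1 hWX
    have hprobX : IsProbabilityMeasure (μ.map X) :=
      Measure.isProbabilityMeasure_map hXmeas.aemeasurable
    have hA : MeasurableSet {p : ℝ × ℝ | p.1 + p.2 ≤ y} :=
      measurableSet_le (measurable_fst.add measurable_snd) measurable_const
    have hGanti : Antitone (fun b : ℝ => (μ.map X) (Set.Iic (y - b))) := by
      intro a b hab
      exact measure_mono (Set.Iic_subset_Iic.2 (by linarith))
    have key : μ {ω | ∑ i ∈ Finset.univ.filter (fun i : Fin K => (i:ℕ) < n + 1), E i ω ≤ y}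
        = ∫⁻ b, exponentialPDF 1 b * (μ.map X) (Set.Iic (y - b)) ∂volume := by
      have h1 : {ω | ∑ i ∈ Finset.univ.filter (fun i : Fin K => (i:ℕ) < n + 1), E i ω ≤ y}
          = (fun ω => (W ω, X ω)) ⁻¹' {p : ℝ × ℝ | p.1 + p.2 ≤ y} := by
        ext ω
        simp only [Set.mem_setOf_eq, Set.mem_preimage, hsum ω]
        constructor <;> intro h <;> linarith
      rw [h1, ← Measure.map_apply (hWmeas.prodMk hXmeas) hA, hmap, hlaw j,
        Measure.prod_apply hA]
      have h2 : ∀ b : ℝ, (Prod.mk b ⁻¹' {p : ℝ × ℝ | p.1 + p.2 ≤ y}) = Set.Iic (y - b) := by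
        intro b; ext a
        simp only [Set.mem_preimage, Set.mem_setOf_eq, Set.mem_Iic]
        constructor <;> intro h <;> linarith
      simp_rw [h2]
      have hpdfmeas : Measurable (exponentialPDF 1) :=
        (measurable_exponentialPDFReal 1).ennreal_ofReal
      rw [show expMeasure 1 = volume.withDensity (exponentialPDF 1) from rfl,
        lintegral_withDensity_eq_lintegral_mul volume hpdfmeas hGanti.measurable]
      simp only [Pi.mul_apply]
    constructor
    · -- y < 0
      intro hy
      rw [key]
      have hzero : ∀ b : ℝ, exponentialPDF 1 b * (μ.map X) (Set.Iic (y - b)) = 0 := by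
        intro b
        rcases lt_or_ge b 0 with h | h
        · rw [exponentialPDF_of_neg h, zero_mul]
        · have : (μ.map X) (Set.Iic (y - b)) = 0 := by
            rw [hsetS]
            exact (ih hnK (y - b)).1 (by linarith)
          rw [this, mul_zero]
      simp only [hzero, lintegral_zero]
    · -- 0 ≤ y
      intro hy
      constructor
      · -- lower bound
        rw [key]
        calc ENNReal.ofReal (Real.exp (-y) * (y ^ (n+1) / (n+1).factorial))
            = ∫⁻ b in Set.Icc (0:ℝ) y,
                ENNReal.ofReal (Real.exp (-y) * ((y - b)^n / n.factorial)) ∂volume :=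
              (lintegral_Icc_pow_div y hy n _ (exp_nonneg _)).symm
          _ ≤ ∫⁻ b in Set.Icc (0:ℝ) y,
                exponentialPDF 1 b * (μ.map X) (Set.Iic (y - b)) ∂volume := by
              refine setLIntegral_mono' measurableSet_Icc fun b hb => ?_
              obtain ⟨hb0, hby⟩ := hb
              have hpdf : exponentialPDF 1 b = ENNReal.ofReal (Real.exp (-b)) := by
                rw [exponentialPDF_of_nonneg hb0]
                norm_num
              have hlow := (ih hnK (y - b)).2 (by linarith) |>.1
              rw [← hsetS] at hlow
              calc ENNReal.ofReal (Real.exp (-y) * ((y - b)^n / n.factorial))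
                  = ENNReal.ofReal (Real.exp (-b)) *
                    ENNReal.ofReal (Real.exp (-(y - b)) * ((y - b)^n / n.factorial)) := by
                    rw [← ENNReal.ofReal_mul (exp_nonneg _), ← mul_assoc, ← Real.exp_add]
                    ring_nf
                _ ≤ exponentialPDF 1 b * (μ.map X) (Set.Iic (y - b)) := by
                    rw [hpdf]
                    exact mul_le_mul_right hlow _
          _ ≤ ∫⁻ b, exponentialPDF 1 b * (μ.map X) (Set.Iic (y - b)) ∂volume :=
              setLIntegral_le_lintegral _ _
      · -- upper bound
        rw [key]
        calc ∫⁻ b, exponentialPDF 1 b * (μ.map X) (Set.Iic (y - b)) ∂volume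
            ≤ ∫⁻ b, (Set.Icc (0:ℝ) y).indicator
                (fun b => ENNReal.ofReal (1 * ((y - b)^n / n.factorial))) b ∂volume := by
              refine lintegral_mono fun b => ?_
              rcases lt_or_ge b 0 with h | h
              · rw [exponentialPDF_of_neg h, zero_mul]
                exact zero_le
              rcases le_or_gt b y with h2 | h2
              · rw [Set.indicator_of_mem (Set.mem_Icc.2 ⟨h, h2⟩)]
                have hpdfle : exponentialPDF 1 b ≤ 1 := by
                  rw [exponentialPDF_of_nonneg h]
                  rw [show ((1:ℝ≥0∞)) = ENNReal.ofReal 1 from ENNReal.ofReal_one.symm]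
                  apply ENNReal.ofReal_le_ofReal
                  simp only [one_mul]
                  exact exp_le_one_iff.2 (by linarith)
                have hup := (ih hnK (y - b)).2 (by linarith) |>.2
                rw [← hsetS] at hup
                calc exponentialPDF 1 b * (μ.map X) (Set.Iic (y - b))
                    ≤ 1 * ENNReal.ofReal ((y - b)^n / n.factorial) :=
                      mul_le_mul' hpdfle hup
                  _ = ENNReal.ofReal (1 * ((y - b)^n / n.factorial)) := by
                      rw [one_mul, one_mul]
              · rw [Set.indicator_of_notMem (by simp [Set.mem_Icc]; intro; linarith)]
                have : (μ.map X) (Set.Iic (y - b)) = 0 := by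
                  rw [hsetS]
                  exact (ih hnK (y - b)).1 (by linarith)
                rw [this, mul_zero]
          _ = ENNReal.ofReal (y ^ (n+1) / (n+1).factorial) := by
              rw [lintegral_indicator measurableSet_Icc,
                lintegral_Icc_pow_div y hy n 1 zero_le_one, one_mul]

lemma continuous_rpow_c {α : ℝ} (hα : 0 < α) : Continuous (fun s : ℝ => s ^ α) := by
  rw [continuous_iff_continuousAt]
  exact fun x => Real.continuousAt_rpow_const x α (Or.inr hα.le)

lemma one_add_rpow_pos {s α : ℝ} (hs : 0 ≤ s) : 0 < 1 + s ^ α := by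
  have := Real.rpow_nonneg hs α
  linarith

lemma p_bounds {Ω : Type*} [MeasurableSpace Ω] (μ : Measure Ω) [IsProbabilityMeasure μ]
    (R η α : ℝ) (hR : 0 < R) (hη : 0 < η) (hα : 0 < α) (K : ℕ)
    (r Y : Ω → ℝ) (hr : Measurable r) (hY : Measurable Y)
    (hrlaw : μ.map r = volume.withDensity (fun s =>
        ENNReal.ofReal (if s ∈ Set.Icc (0 : ℝ) R then 2 * s / R ^ 2 else 0)))
    (hY0 : ∀ y : ℝ, y < 0 → (μ.map Y) (Set.Iic y) = 0)
    (hYlow : ∀ y : ℝ, 0 ≤ y → ENNReal.ofReal (Real.exp (-y) * (y^K / K.factorial))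
        ≤ (μ.map Y) (Set.Iic y))
    (hYup : ∀ y : ℝ, 0 ≤ y → (μ.map Y) (Set.Iic y) ≤ ENNReal.ofReal (y^K / K.factorial))
    (hind : IndepFun r Y μ) (t : ℝ) (ht : 0 ≤ t) :
    ENNReal.ofReal (Real.exp (-(t * (1 + R ^ α) / η)) *
        (t ^ K * ∫ s in (0:ℝ)..R, 2 * s / R ^ 2 * (((1 + s ^ α) / η) ^ K / K.factorial)))
      ≤ μ {ω | η * Y ω / (1 + r ω ^ α) ≤ t} ∧
    μ {ω | η * Y ω / (1 + r ω ^ α) ≤ t}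
      ≤ ENNReal.ofReal (t ^ K *
          ∫ s in (0:ℝ)..R, 2 * s / R ^ 2 * (((1 + s ^ α) / η) ^ K / K.factorial)) := by
  have hprobY : IsProbabilityMeasure (μ.map Y) := Measure.isProbabilityMeasure_map hY.aemeasurable
  set A : Set (ℝ × ℝ) := {q : ℝ × ℝ | η * q.2 / (1 + q.1 ^ α) ≤ t} with hA
  have hAmeas : MeasurableSet A := by
    apply measurableSet_le
    · apply Measurable.div
      · exact measurable_snd.const_mul η
      · exact ((continuous_rpow_c hα).measurable.comp measurable_fst).const_add 1
    · exact measurable_const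
  have hdens : Measurable (fun s : ℝ =>
      ENNReal.ofReal (if s ∈ Set.Icc (0:ℝ) R then 2 * s / R ^ 2 else 0)) := by
    apply Measurable.ennreal_ofReal
    exact Measurable.ite measurableSet_Icc (by fun_prop) measurable_const
  have hkey : μ {ω | η * Y ω / (1 + r ω ^ α) ≤ t}
      = ∫⁻ s, ENNReal.ofReal (if s ∈ Set.Icc (0:ℝ) R then 2 * s / R ^ 2 else 0) *
          (μ.map Y) (Prod.mk s ⁻¹' A) ∂volume := by
    have h1 : {ω | η * Y ω / (1 + r ω ^ α) ≤ t} = (fun ω => (r ω, Y ω)) ⁻¹' A := rfl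
    rw [h1, ← Measure.map_apply (hr.prodMk hY) hAmeas,
      (indepFun_iff_map_prod_eq_prod_map_map hr.aemeasurable hY.aemeasurable).1 hind,
      Measure.prod_apply hAmeas, hrlaw,
      lintegral_withDensity_eq_lintegral_mul volume
        hdens (measurable_measure_prodMk_left hAmeas)]
    simp only [Pi.mul_apply]
  have hsec : ∀ s : ℝ, 0 ≤ s → Prod.mk s ⁻¹' A = Set.Iic ((1 + s ^ α) * t / η) := by
    intro s hs
    have hpos := one_add_rpow_pos (α := α) hs
    ext y
    simp only [Set.mem_preimage, hA, Set.mem_setOf_eq, Set.mem_Iic]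
    rw [div_le_iff₀ hpos, le_div_iff₀ hη]
    constructor <;> intro h <;> nlinarith
  -- the common integrand manipulations
  have hint : IntegrableOn
      (fun s : ℝ => 2 * s / R ^ 2 * (((1 + s ^ α) * t / η) ^ K / K.factorial))
      (Set.Icc 0 R) := by
    apply Continuous.integrableOn_Icc
    have := continuous_rpow_c hα
    fun_prop
  have hptK : ∀ s : ℝ, 0 ≤ s →
      ((1 + s ^ α) * t / η) ^ K = t ^ K * (((1 + s ^ α) / η) ^ K) := by
    intro s hs
    rw [show (1 + s ^ α) * t / η = t * ((1 + s ^ α) / η) by ring, mul_pow]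
  have hIccInt : ∀ c : ℝ, 0 ≤ c →
      ∫⁻ s in Set.Icc (0:ℝ) R,
        ENNReal.ofReal (c * (2 * s / R ^ 2 * (((1 + s ^ α) * t / η) ^ K / K.factorial))) ∂volume
      = ENNReal.ofReal (c * (t ^ K *
          ∫ s in (0:ℝ)..R, 2 * s / R ^ 2 * (((1 + s ^ α) / η) ^ K / K.factorial))) := by
    intro c hc
    rw [← MeasureTheory.ofReal_integral_eq_lintegral_ofReal (hint.const_mul c) ?nn]
    case nn =>
      refine (ae_restrict_iff' measurableSet_Icc).2 (ae_of_all _ fun s hs => ?_)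
      have hs0 : (0:ℝ) ≤ s := hs.1
      have h1 := one_add_rpow_pos (α := α) hs0
      have h2 : (0:ℝ) ≤ 2 * s / R ^ 2 := div_nonneg (by linarith) (by positivity)
      have h3 : (0:ℝ) ≤ ((1 + s ^ α) * t / η) ^ K :=
        pow_nonneg (div_nonneg (mul_nonneg h1.le ht) hη.le) K
      have h4 : (0:ℝ) ≤ (K.factorial : ℝ) := Nat.cast_nonneg _
      exact mul_nonneg hc (mul_nonneg h2 (div_nonneg h3 h4))
    congr 1
    rw [integral_const_mul]
    congr 1
    rw [MeasureTheory.integral_Icc_eq_integral_Ioc, ← intervalIntegral.integral_of_le hR.le]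
    rw [← intervalIntegral.integral_const_mul]
    apply intervalIntegral.integral_congr
    intro s hs
    rw [Set.uIcc_of_le hR.le] at hs
    dsimp only
    rw [hptK s hs.1]
    ring
  constructor
  · -- lower
    rw [hkey]
    calc ENNReal.ofReal (Real.exp (-(t * (1 + R ^ α) / η)) *
          (t ^ K * ∫ s in (0:ℝ)..R, 2 * s / R ^ 2 * (((1 + s ^ α) / η) ^ K / K.factorial)))
        = ∫⁻ s in Set.Icc (0:ℝ) R, ENNReal.ofReal (Real.exp (-(t * (1 + R ^ α) / η)) *
            (2 * s / R ^ 2 * (((1 + s ^ α) * t / η) ^ K / K.factorial))) ∂volume :=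
          (hIccInt _ (exp_nonneg _)).symm
      _ ≤ ∫⁻ s in Set.Icc (0:ℝ) R,
            ENNReal.ofReal (if s ∈ Set.Icc (0:ℝ) R then 2 * s / R ^ 2 else 0) *
            (μ.map Y) (Prod.mk s ⁻¹' A) ∂volume := by
          refine setLIntegral_mono' measurableSet_Icc fun s hs => ?_
          obtain ⟨hs0, hsR⟩ := hs
          rw [if_pos (Set.mem_Icc.2 ⟨hs0, hsR⟩), hsec s hs0]
          set u : ℝ := (1 + s ^ α) * t / η with hu
          have hu0 : 0 ≤ u := by
            have := one_add_rpow_pos (α := α) hs0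
            positivity
          have huB : u ≤ t * (1 + R ^ α) / η := by
            have h1 : s ^ α ≤ R ^ α := Real.rpow_le_rpow hs0 hsR hα.le
            rw [hu, mul_comm (1 + s ^ α) t]
            gcongr
          have hexp : Real.exp (-(t * (1 + R ^ α) / η)) ≤ Real.exp (-u) :=
            exp_le_exp.2 (by linarith)
          have hlow := hYlow u hu0
          calc ENNReal.ofReal (Real.exp (-(t * (1 + R ^ α) / η)) *
                (2 * s / R ^ 2 * (u ^ K / K.factorial)))
              ≤ ENNReal.ofReal ((2 * s / R ^ 2) * (Real.exp (-u) * (u ^ K / K.factorial))) := by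
                apply ENNReal.ofReal_le_ofReal
                have h2 : (0:ℝ) ≤ 2 * s / R ^ 2 := div_nonneg (by linarith) (by positivity)
                have h3 : (0:ℝ) ≤ u ^ K / K.factorial :=
                  div_nonneg (pow_nonneg hu0 K) (Nat.cast_nonneg _)
                calc Real.exp (-(t * (1 + R ^ α) / η)) * (2 * s / R ^ 2 * (u ^ K / K.factorial))
                    ≤ Real.exp (-u) * (2 * s / R ^ 2 * (u ^ K / K.factorial)) := by
                      exact mul_le_mul_of_nonneg_right hexp (mul_nonneg h2 h3)
                  _ = (2 * s / R ^ 2) * (Real.exp (-u) * (u ^ K / K.factorial)) := by ring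
            _ ≤ ENNReal.ofReal (2 * s / R ^ 2) * (μ.map Y) (Set.Iic u) := by
                rw [ENNReal.ofReal_mul (div_nonneg (by linarith) (by positivity))]
                exact mul_le_mul_right hlow _
      _ ≤ ∫⁻ s, ENNReal.ofReal (if s ∈ Set.Icc (0:ℝ) R then 2 * s / R ^ 2 else 0) *
            (μ.map Y) (Prod.mk s ⁻¹' A) ∂volume := setLIntegral_le_lintegral _ _
  · -- upper
    rw [hkey]
    calc ∫⁻ s, ENNReal.ofReal (if s ∈ Set.Icc (0:ℝ) R then 2 * s / R ^ 2 else 0) *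
          (μ.map Y) (Prod.mk s ⁻¹' A) ∂volume
        ≤ ∫⁻ s, (Set.Icc (0:ℝ) R).indicator (fun s =>
            ENNReal.ofReal (1 * (2 * s / R ^ 2 * (((1 + s ^ α) * t / η) ^ K / K.factorial)))) s
            ∂volume := by
          refine lintegral_mono fun s => ?_
          by_cases hs : s ∈ Set.Icc (0:ℝ) R
          · obtain ⟨hs0, hsR⟩ := hs
            rw [Set.indicator_of_mem (Set.mem_Icc.2 ⟨hs0, hsR⟩), if_pos (Set.mem_Icc.2 ⟨hs0, hsR⟩),
              hsec s hs0]
            set u : ℝ := (1 + s ^ α) * t / η with hu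
            have hu0 : 0 ≤ u := by
              have := one_add_rpow_pos (α := α) hs0
              positivity
            have hup := hYup u hu0
            calc ENNReal.ofReal (2 * s / R ^ 2) * (μ.map Y) (Set.Iic u)
                ≤ ENNReal.ofReal (2 * s / R ^ 2) * ENNReal.ofReal (u ^ K / K.factorial) :=
                  mul_le_mul_right hup _
              _ = ENNReal.ofReal (1 * (2 * s / R ^ 2 * (u ^ K / K.factorial))) := by
                  rw [← ENNReal.ofReal_mul (div_nonneg (by linarith) (by positivity)), one_mul]
          · rw [Set.indicator_of_notMem hs, if_neg hs]
            simp
      _ = ENNReal.ofReal (t ^ K *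
            ∫ s in (0:ℝ)..R, 2 * s / R ^ 2 * (((1 + s ^ α) / η) ^ K / K.factorial)) := by
          rw [lintegral_indicator measurableSet_Icc, hIccInt 1 zero_le_one, one_mul]

lemma count_event_bounds {Ω : Type*} [MeasurableSpace Ω] (μ : Measure Ω)
    [IsProbabilityMeasure μ] {M : ℕ} (Z : Fin M → Ω → ℝ)
    (hZmeas : ∀ j, Measurable (Z j))
    (hindep : iIndepFun Z μ)
    (t : ℝ) (p : ℝ≥0∞) (hsame : ∀ j, μ (Z j ⁻¹' Set.Iic t) = p) (m : ℕ) (hmM : m ≤ M) :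
    (M.choose m : ℝ≥0∞) * (p ^ m * (1 - p) ^ (M - m))
      ≤ μ {ω | m ≤ (Finset.univ.filter (fun j => Z j ω ≤ t)).card} ∧
    μ {ω | m ≤ (Finset.univ.filter (fun j => Z j ω ≤ t)).card}
      ≤ (M.choose m : ℝ≥0∞) * p ^ m := by
  classical
  set pc : Finset (Finset (Fin M)) := Finset.powersetCard m Finset.univ with hpc
  have hUeq : {ω : Ω | m ≤ (Finset.univ.filter (fun j => Z j ω ≤ t)).card}
      = ⋃ S ∈ pc, ⋂ j ∈ S, Z j ⁻¹' Set.Iic t := by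
    ext ω
    simp only [Set.mem_setOf_eq, Set.mem_iUnion, Set.mem_iInter, Set.mem_preimage,
      Set.mem_Iic, hpc, Finset.mem_powersetCard]
    constructor
    · intro h
      obtain ⟨T, hTsub, hTcard⟩ := Finset.exists_subset_card_eq h
      exact ⟨T, ⟨Finset.subset_univ T, hTcard⟩, fun j hj =>
        (Finset.mem_filter.1 (hTsub hj)).2⟩
    · rintro ⟨S, ⟨-, hScard⟩, hS⟩
      calc m = S.card := hScard.symm
        _ ≤ _ := Finset.card_le_card fun j hj =>
            Finset.mem_filter.2 ⟨Finset.mem_univ j, hS j hj⟩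
  have hInterMeas : ∀ S : Finset (Fin M), MeasurableSet (⋂ j ∈ S, Z j ⁻¹' Set.Iic t) :=
    fun S => MeasurableSet.biInter (Set.to_countable _)
      (fun j _ => (hZmeas j) measurableSet_Iic)
  have hInterVal : ∀ S ∈ pc, μ (⋂ j ∈ S, Z j ⁻¹' Set.Iic t) = p ^ m := by
    intro S hS
    have hScard : S.card = m := (Finset.mem_powersetCard.1 hS).2
    rw [hindep.measure_inter_preimage_eq_mul S (sets := fun _ => Set.Iic t)
      (fun i _ => measurableSet_Iic)]
    rw [Finset.prod_congr rfl (fun j _ => hsame j), Finset.prod_const, hScard]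
  constructor
  · -- lower bound
    set ES : Finset (Fin M) → Set Ω := fun S =>
      ⋂ j ∈ (Finset.univ : Finset (Fin M)),
        Z j ⁻¹' (if j ∈ S then Set.Iic t else (Set.Iic t)ᶜ) with hES
    have hESmeas : ∀ S, MeasurableSet (ES S) := by
      intro S
      refine MeasurableSet.biInter (Set.to_countable _) (fun j _ => (hZmeas j) ?_)
      by_cases h : j ∈ S <;> simp [h, measurableSet_Iic, measurableSet_Iic.compl]
    have hESval : ∀ S ∈ pc, μ (ES S) = p ^ m * (1 - p) ^ (M - m) := by
      intro S hS
      have hScard : S.card = m := (Finset.mem_powersetCard.1 hS).2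
      rw [hES]
      rw [hindep.measure_inter_preimage_eq_mul Finset.univ
        (sets := fun j => if j ∈ S then Set.Iic t else (Set.Iic t)ᶜ)
        (fun i _ => by by_cases h : i ∈ S <;>
          simp [h, measurableSet_Iic, measurableSet_Iic.compl])]
      have hval : ∀ j : Fin M, μ (Z j ⁻¹' (if j ∈ S then Set.Iic t else (Set.Iic t)ᶜ))
          = if j ∈ S then p else 1 - p := by
        intro j
        by_cases h : j ∈ S
        · simp only [h, if_true]; exact hsame j
        · simp only [h, if_false]
          rw [Set.preimage_compl, prob_compl_eq_one_sub ((hZmeas j) measurableSet_Iic),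
            hsame j]
      rw [Finset.prod_congr rfl (fun j _ => hval j), Finset.prod_ite, Finset.prod_const,
        Finset.prod_const]
      congr 2
      · have : Finset.filter (fun x => x ∈ S) Finset.univ = S := by
          ext x; simp
        rw [this, hScard]
      · have : Finset.filter (fun x => x ∉ S) Finset.univ = Sᶜ := by
          ext x; simp
        rw [this, Finset.card_compl, Fintype.card_fin, hScard]
    have hdisj : (pc : Set (Finset (Fin M))).PairwiseDisjoint ES := by
      intro S hS T hT hST
      refine Set.disjoint_left.2 fun ω hωS hωT => ?_
      have hSc : S.card = m := (Finset.mem_powersetCard.1 hS).2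
      have hTc : T.card = m := (Finset.mem_powersetCard.1 hT).2
      have hj : ∃ j, j ∈ S ∧ j ∉ T := by
        by_contra h
        push_neg at h
        exact hST (Finset.eq_of_subset_of_card_le (fun j hj => h j hj)
          (by rw [hSc, hTc]))
      obtain ⟨j, hjS, hjT⟩ := hj
      have h1 := Set.mem_iInter₂.1 hωS j (Finset.mem_univ j)
      have h2 := Set.mem_iInter₂.1 hωT j (Finset.mem_univ j)
      rw [if_pos hjS] at h1
      rw [if_neg hjT] at h2
      exact h2 h1
    have hsub : ∀ S, ES S ⊆ ⋂ j ∈ S, Z j ⁻¹' Set.Iic t := by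
      intro S ω hω
      refine Set.mem_iInter₂.2 fun j hj => ?_
      have := Set.mem_iInter₂.1 hω j (Finset.mem_univ j)
      rwa [if_pos hj] at this
    calc (M.choose m : ℝ≥0∞) * (p ^ m * (1 - p) ^ (M - m))
        = ∑ S ∈ pc, μ (ES S) := by
          rw [Finset.sum_congr rfl hESval, Finset.sum_const, nsmul_eq_mul, hpc,
            Finset.card_powersetCard, Finset.card_univ, Fintype.card_fin]
      _ = μ (⋃ S ∈ pc, ES S) :=
          (measure_biUnion_finset hdisj (fun S _ => hESmeas S)).symm
      _ ≤ μ {ω : Ω | m ≤ (Finset.univ.filter (fun j => Z j ω ≤ t)).card} := by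
          refine measure_mono ?_
          rw [hUeq]
          exact Set.iUnion₂_mono fun S _ => hsub S
  · -- upper bound
    rw [hUeq]
    calc μ (⋃ S ∈ pc, ⋂ j ∈ S, Z j ⁻¹' Set.Iic t)
        ≤ ∑ S ∈ pc, μ (⋂ j ∈ S, Z j ⁻¹' Set.Iic t) := measure_biUnion_finset_le pc _
      _ = ∑ _S ∈ pc, p ^ m := Finset.sum_congr rfl hInterVal
      _ = (M.choose m : ℝ≥0∞) * p ^ m := by
          rw [Finset.sum_const, nsmul_eq_mul, hpc, Finset.card_powersetCard,
            Finset.card_univ, Fintype.card_fin]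

lemma erlang_Y_bounds {Ω : Type*} [MeasurableSpace Ω] (μ : Measure Ω) [IsProbabilityMeasure μ]
    {K : ℕ} (E : Fin K → Ω → ℝ) (hmeas : ∀ i, Measurable (E i))
    (hindep : iIndepFun E μ)
    (hlaw : ∀ i, Measure.map (E i) μ = expMeasure 1)
    (Y : Ω → ℝ) (hY : Y = fun ω => ∑ i, E i ω) :
    (∀ y : ℝ, y < 0 → μ {ω | Y ω ≤ y} = 0) ∧
    (∀ y : ℝ, 0 ≤ y → ENNReal.ofReal (Real.exp (-y) * (y^K / K.factorial)) ≤ μ {ω | Y ω ≤ y} ∧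
      μ {ω | Y ω ≤ y} ≤ ENNReal.ofReal (y^K / K.factorial)) := by
  have hfil : (Finset.univ.filter (fun i : Fin K => (i:ℕ) < K)) = Finset.univ := by
    ext i; simp [i.isLt]
  have hsets : ∀ y : ℝ, {ω | Y ω ≤ y}
      = {ω | ∑ i ∈ Finset.univ.filter (fun i : Fin K => (i:ℕ) < K), E i ω ≤ y} := by
    intro y; ext ω; rw [hY]; simp [hfil]
  have h := erlang_cdf_bounds μ E hmeas hindep hlaw K le_rfl
  exact ⟨fun y hy => by rw [hsets y]; exact (h y).1 hy,
    fun y hy => by rw [hsets y]; exact (h y).2 hy⟩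

lemma ae_nonneg_of_cdf_zero {Ω : Type*} [MeasurableSpace Ω] (μ : Measure Ω)
    (Y : Ω → ℝ) (h0 : ∀ y : ℝ, y < 0 → μ {ω | Y ω ≤ y} = 0) : ∀ᵐ ω ∂μ, 0 ≤ Y ω := by
  rw [MeasureTheory.ae_iff]
  have hU : μ (⋃ n : ℕ, {ω | Y ω ≤ -(1/(n+1))}) = 0 :=
    measure_iUnion_null fun n => h0 _ (by
      have : (0:ℝ) < 1/(n+1) := by positivity
      linarith)
  refine measure_mono_null (fun ω hω => ?_) hU
  simp only [Set.mem_setOf_eq, not_le] at hω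
  obtain ⟨n, hn⟩ := exists_nat_one_div_lt (show (0:ℝ) < -Y ω by linarith)
  exact Set.mem_iUnion.2 ⟨n, by simp only [Set.mem_setOf_eq]; push_cast; linarith⟩

lemma ae_r_nonneg {Ω : Type*} [MeasurableSpace Ω] (μ : Measure Ω) (R : ℝ)
    (r : Ω → ℝ) (hr : Measurable r)
    (hrlaw : Measure.map r μ = volume.withDensity (fun s =>
        ENNReal.ofReal (if s ∈ Set.Icc (0 : ℝ) R then 2 * s / R ^ 2 else 0))) :
    ∀ᵐ ω ∂μ, 0 ≤ r ω := by
  rw [MeasureTheory.ae_iff]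
  have h1 : {ω | ¬ 0 ≤ r ω} = r ⁻¹' Set.Iio 0 := by
    ext ω; simp [Set.mem_Iio, not_le]
  rw [h1, ← Measure.map_apply hr measurableSet_Iio, hrlaw,
    withDensity_apply _ measurableSet_Iio]
  rw [setLIntegral_congr_fun measurableSet_Iio
    (fun s (hs : s < 0) => by
      rw [if_neg (by simp [Set.mem_Icc]; intro h; linarith)])]
  simp

/-- High-SNR asymptotic of the `m`-th user's outage probability (Corollary 3, integral form):
`ρ^{mK} P(ρ) → (M!/((M-m)! m!)) ((2/R²) ∫_0^R (((1+s^α) ε_m/(η (a_m-ε_m a_n)))^K / K!) s ds)^m`,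
so the outage probability decays like `ρ^{-mK}` and the diversity order is `m K`. -/
theorem outage_probability_m_user_high_snr
    {ΩSp : Type*} [MeasurableSpace ΩSp] (μ : Measure ΩSp) [IsProbabilityMeasure μ]
    (R η α εm am an : ℝ) (hR : 0 < R) (hη : 0 < η) (hα : 0 < α)
    (hεm : 0 < εm) (ham : 0 < am) (han : 0 < an) (hcond : εm * an < am)
    (K M m : ℕ) (hK : 1 ≤ K) (hM : 1 ≤ M) (hm1 : 1 ≤ m) (hmM : m ≤ M)
    (r Y : Fin M → ΩSp → ℝ)
    (hrmeas : ∀ j, Measurable (r j)) (hYmeas : ∀ j, Measurable (Y j))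
    -- the pairs (r_j, Y_j) are independent across j
    (hpairsindep : iIndepFun (fun j ω => (r j ω, Y j ω)) μ)
    -- the pairs (r_j, Y_j) are identically distributed
    (hpairsident : ∀ j k, Measure.map (fun ω => (r j ω, Y j ω)) μ
        = Measure.map (fun ω => (r k ω, Y k ω)) μ)
    -- each r_j has density 2s/R² on [0,R]
    (hrlaw : ∀ j, Measure.map (r j) μ = volume.withDensity (fun s =>
        ENNReal.ofReal (if s ∈ Set.Icc (0 : ℝ) R then 2 * s / R ^ 2 else 0)))
    -- each Y_j is Erlang(K): a sum of K independent rate-one exponentials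
    (hYerlang : ∀ j, ∃ E : Fin K → ΩSp → ℝ, (∀ i, Measurable (E i)) ∧
        iIndepFun E μ ∧
        (∀ i, Measure.map (E i) μ = expMeasure 1) ∧ Y j = fun ω => ∑ i, E i ω)
    -- r_j and Y_j are independent
    (hrYindep : ∀ j, IndepFun (r j) (Y j) μ)
    (Z : Fin M → ΩSp → ℝ) (hZ : ∀ j ω, Z j ω = η * Y j ω / (1 + r j ω ^ α))
    (Zord : ΩSp → ℝ) (hZord : ∀ ω, Zord ω = orderStat (fun j => Z j ω) m)
    (P : ℝ → ℝ)
    (hP : ∀ ρ, P ρ = (μ {ω | ρ * Zord ω * am / (ρ * Zord ω * an + 1) ≤ εm}).toReal) :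
    Filter.Tendsto (fun ρ => ρ ^ (m * K) * P ρ) Filter.atTop
      (nhds (((Nat.factorial M : ℝ) / ((Nat.factorial (M - m) : ℝ) * (Nat.factorial m : ℝ))) *
        ((2 / R ^ 2) * ∫ s in (0 : ℝ)..R,
          (((1 + s ^ α) * εm / (η * (am - εm * an))) ^ K / (Nat.factorial K : ℝ)) * s) ^ m)) := by
  classical
  have hδ : 0 < am - εm * an := sub_pos.2 hcond
  set δ : ℝ := am - εm * an with hδdef
  set c0 : ℝ := ∫ s in (0:ℝ)..R, 2 * s / R ^ 2 * (((1 + s ^ α) / η) ^ K / K.factorial)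
    with hc0def
  have hc0 : 0 ≤ c0 := by
    rw [hc0def]
    apply intervalIntegral.integral_nonneg hR.le
    intro s hs
    have h1 := one_add_rpow_pos (α := α) hs.1
    exact mul_nonneg (div_nonneg (by linarith [hs.1]) (by positivity))
      (div_nonneg (pow_nonneg (div_nonneg h1.le hη.le) K) (Nat.cast_nonneg _))
  set g : ℝ × ℝ → ℝ := fun q => η * q.2 / (1 + q.1 ^ α) with hgdef
  have hgmeas : Measurable g := by
    apply Measurable.div
    · exact measurable_snd.const_mul η
    · exact ((continuous_rpow_c hα).measurable.comp measurable_fst).const_add 1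
  have hpairmeas : ∀ j, Measurable fun ω => (r j ω, Y j ω) :=
    fun j => (hrmeas j).prodMk (hYmeas j)
  have hZeq : ∀ j, Z j = fun ω => g (r j ω, Y j ω) := fun j => funext fun ω => hZ j ω
  have hZmeas : ∀ j, Measurable (Z j) := fun j => by
    rw [hZeq j]; exact hgmeas.comp (hpairmeas j)
  have hZindep : iIndepFun Z μ := by
    have h := hpairsindep.comp (fun _ => g) (fun _ => hgmeas)
    have h2 : (fun j => g ∘ (fun ω => (r j ω, Y j ω))) = Z := by
      funext j ω; exact (hZ j ω).symm
    rwa [h2] at h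
  set j0 : Fin M := ⟨0, hM⟩ with hj0
  have hsame : ∀ (t : ℝ) (j : Fin M), μ (Z j ⁻¹' Set.Iic t) = μ (Z j0 ⁻¹' Set.Iic t) := by
    intro t j
    have h1 : ∀ k : Fin M, Z k ⁻¹' Set.Iic t
        = (fun ω => (r k ω, Y k ω)) ⁻¹' (g ⁻¹' Set.Iic t) := by
      intro k; rw [hZeq k]; rfl
    rw [h1 j, h1 j0, ← Measure.map_apply (hpairmeas j) (hgmeas measurableSet_Iic),
      ← Measure.map_apply (hpairmeas j0) (hgmeas measurableSet_Iic), hpairsident j j0]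
  -- Erlang bounds for Y j0
  obtain ⟨E, hEmeas, hEindep, hElaw, hYsum⟩ := hYerlang j0
  have hYb := erlang_Y_bounds μ E hEmeas hEindep hElaw (Y j0) hYsum
  have hmapY : ∀ y : ℝ, (μ.map (Y j0)) (Set.Iic y) = μ {ω | Y j0 ω ≤ y} := fun y => by
    rw [Measure.map_apply (hYmeas j0) measurableSet_Iic]; rfl
  -- CDF bounds for Z j0
  have hpeb : ∀ t : ℝ, 0 ≤ t →
      ENNReal.ofReal (Real.exp (-(t * (1 + R ^ α) / η)) * (t ^ K * c0))
        ≤ μ (Z j0 ⁻¹' Set.Iic t) ∧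
      μ (Z j0 ⁻¹' Set.Iic t) ≤ ENNReal.ofReal (t ^ K * c0) := by
    intro t ht
    have hset : Z j0 ⁻¹' Set.Iic t = {ω | η * Y j0 ω / (1 + r j0 ω ^ α) ≤ t} := by
      ext ω
      simp only [Set.mem_preimage, Set.mem_Iic, Set.mem_setOf_eq, hZ j0 ω]
    have h := p_bounds μ R η α hR hη hα K (r j0) (Y j0) (hrmeas j0) (hYmeas j0) (hrlaw j0)
      (fun y hy => by rw [hmapY]; exact hYb.1 y hy)
      (fun y hy => by rw [hmapY]; exact (hYb.2 y hy).1)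
      (fun y hy => by rw [hmapY]; exact (hYb.2 y hy).2)
      (hrYindep j0) t ht
    rw [← hc0def] at h
    rw [hset]
    exact h
  -- a.s. nonnegativity of all Z j
  have hgood : ∀ᵐ ω ∂μ, ∀ j, 0 ≤ Z j ω := by
    have h1 : ∀ᵐ ω ∂μ, ∀ j, 0 ≤ Y j ω ∧ 0 ≤ r j ω := (MeasureTheory.ae_all_iff).2 fun j => by
      obtain ⟨E', hE'm, hE'i, hE'l, hY's⟩ := hYerlang j
      exact ((erlang_Y_bounds μ E' hE'm hE'i hE'l (Y j) hY's).1 |>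
        ae_nonneg_of_cdf_zero μ (Y j)).and (ae_r_nonneg μ R (r j) (hrmeas j) (hrlaw j))
    filter_upwards [h1] with ω hω j
    rw [hZ j ω]
    exact div_nonneg (mul_nonneg hη.le (hω j).1) (one_add_rpow_pos (hω j).2).le
  -- event identification
  have hEv : ∀ ρ : ℝ, 0 < ρ →
      μ {ω | ρ * Zord ω * am / (ρ * Zord ω * an + 1) ≤ εm}
        = μ {ω | m ≤ (Finset.univ.filter (fun j => Z j ω ≤ εm / (ρ * δ))).card} := by
    intro ρ hρ
    apply measure_congr
    rw [Filter.eventuallyEq_set]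
    filter_upwards [hgood] with ω hω
    have hz0 : 0 ≤ Zord ω := by
      rw [hZord ω]
      obtain ⟨j, hj⟩ := orderStat_mem (fun j => Z j ω) hm1 hmM
      rw [← hj]; exact hω j
    have hρδ : 0 < ρ * δ := mul_pos hρ hδ
    have hD : 0 < ρ * Zord ω * an + 1 := by
      nlinarith [mul_nonneg (mul_nonneg hρ.le hz0) han.le]
    have hexpand : Zord ω * (ρ * δ) = ρ * Zord ω * am - εm * (ρ * Zord ω * an) := by
      rw [hδdef]; ring
    show ρ * Zord ω * am / (ρ * Zord ω * an + 1) ≤ εm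
        ↔ m ≤ (Finset.univ.filter (fun j => Z j ω ≤ εm / (ρ * δ))).card
    rw [div_le_iff₀ hD]
    constructor
    · intro h
      refine (orderStat_le_iff (fun j => Z j ω) hm1 hmM _).1 ?_
      rw [← hZord ω, le_div_iff₀ hρδ, hexpand]
      linarith
    · intro h
      have hz : Zord ω ≤ εm / (ρ * δ) := by
        rw [hZord ω]
        exact (orderStat_le_iff (fun j => Z j ω) hm1 hmM _).2 h
      rw [le_div_iff₀ hρδ, hexpand] at hz
      linarith
  -- final limit: setup
  set L : ℝ := (M.choose m : ℝ) * ((εm / δ) ^ K * c0) ^ m with hLdef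
  have hTL : ((Nat.factorial M : ℝ) / ((Nat.factorial (M - m) : ℝ) * (Nat.factorial m : ℝ))) *
      ((2 / R ^ 2) * ∫ s in (0 : ℝ)..R,
        (((1 + s ^ α) * εm / (η * δ)) ^ K / (Nat.factorial K : ℝ)) * s) ^ m = L := by
    have hchoose : ((Nat.factorial M : ℝ) / ((Nat.factorial (M - m) : ℝ)
        * (Nat.factorial m : ℝ))) = (M.choose m : ℝ) := by
      rw [div_eq_iff (by positivity :
        ((Nat.factorial (M - m) : ℝ) * (Nat.factorial m : ℝ)) ≠ 0)]
      have h := Nat.choose_mul_factorial_mul_factorial hmM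
      push_cast [← h]
      ring
    have hint : ∫ s in (0 : ℝ)..R,
        (((1 + s ^ α) * εm / (η * δ)) ^ K / (Nat.factorial K : ℝ)) * s
        = (εm / δ) ^ K * ∫ s in (0 : ℝ)..R, (((1 + s ^ α) / η) ^ K / K.factorial) * s := by
      rw [← intervalIntegral.integral_const_mul]
      apply intervalIntegral.integral_congr
      intro s hs
      dsimp only
      have h1 : (1 + s ^ α) * εm / (η * δ) = ((1 + s ^ α) / η) * (εm / δ) := by
        field_simp
      rw [h1, mul_pow]
      ring
    have hc0I : c0 = (2 / R ^ 2) * ∫ s in (0 : ℝ)..R,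
        (((1 + s ^ α) / η) ^ K / K.factorial) * s := by
      rw [hc0def, ← intervalIntegral.integral_const_mul]
      apply intervalIntegral.integral_congr
      intro s hs
      dsimp only
      ring
    rw [hchoose, hint, hLdef, hc0I]
    ring
  rw [hTL]
  -- limit of t
  set tf : ℝ → ℝ := fun ρ => εm / (ρ * δ) with htfdef
  have htf0 : Filter.Tendsto tf Filter.atTop (nhds 0) := by
    have : tf = fun ρ => (εm / δ) * ρ⁻¹ := by
      funext ρ
      show εm / (ρ * δ) = (εm / δ) * ρ⁻¹
      rw [div_eq_mul_inv, mul_inv, div_eq_mul_inv]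
      ring
    rw [this]
    simpa using tendsto_inv_atTop_zero.const_mul (εm / δ)
  -- the squeezing functions
  set F : ℝ → ℝ := fun x => (M.choose m : ℝ) *
      (Real.exp (-(x * (1 + R ^ α) / η)) * ((εm / δ) ^ K * c0)) ^ m *
      (1 - x ^ K * c0) ^ (M - m) with hFdef
  have hFcont : Continuous F := by
    apply Continuous.mul
    apply Continuous.mul continuous_const
    · apply Continuous.pow
      exact (((continuous_id.mul continuous_const).div_const η).neg.rexp).mul continuous_const
    · exact ((continuous_const.sub ((continuous_pow K).mul continuous_const)).pow _)
  have hF0 : F 0 = L := by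
    rw [hFdef, hLdef]
    simp only [zero_mul, zero_div, neg_zero, Real.exp_zero, one_mul,
      zero_pow (by omega : K ≠ 0), sub_zero, one_pow, mul_one]
  have hFlim : Filter.Tendsto (fun ρ => F (tf ρ)) Filter.atTop (nhds L) := by
    rw [← hF0]
    exact (hFcont.tendsto 0).comp htf0
  -- eventual smallness
  have hsm : ∀ᶠ ρ : ℝ in Filter.atTop, (tf ρ) ^ K * c0 ≤ 1 := by
    have h1 : Filter.Tendsto (fun ρ => (tf ρ) ^ K * c0) Filter.atTop (nhds 0) := by
      have h2 : Filter.Tendsto (fun x : ℝ => x ^ K * c0) (nhds 0) (nhds 0) := by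
        have := (show Continuous (fun x : ℝ => x ^ K * c0) by fun_prop).tendsto 0
        simpa [zero_pow (by omega : K ≠ 0)] using this
      exact h2.comp htf0
    exact h1.eventually_le_const zero_lt_one
  -- per-ρ bounds
  have hPbounds : ∀ ρ : ℝ, 0 < ρ → (tf ρ) ^ K * c0 ≤ 1 →
      F (tf ρ) ≤ ρ ^ (m * K) * P ρ ∧ ρ ^ (m * K) * P ρ ≤ L := by
    intro ρ hρ hsmall
    have ht0 : 0 ≤ tf ρ := le_of_lt (div_pos hεm (mul_pos hρ hδ))
    set t : ℝ := tf ρ with htdef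
    set q : ℝ := (μ (Z j0 ⁻¹' Set.Iic t)).toReal with hqdef
    have hpne : μ (Z j0 ⁻¹' Set.Iic t) ≠ ⊤ := measure_ne_top μ _
    have hq1 : q ≤ 1 := by
      rw [hqdef, ← ENNReal.toReal_one]
      exact ENNReal.toReal_mono ENNReal.one_ne_top prob_le_one
    have hqup : q ≤ t ^ K * c0 :=
      ENNReal.toReal_le_of_le_ofReal (mul_nonneg (pow_nonneg ht0 K) hc0) (hpeb t ht0).2
    have hqlow : Real.exp (-(t * (1 + R ^ α) / η)) * (t ^ K * c0) ≤ q :=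
      (ENNReal.ofReal_le_iff_le_toReal hpne).1 (hpeb t ht0).1
    have hq0' : (0:ℝ) ≤ q := ENNReal.toReal_nonneg
    have hcomb := count_event_bounds μ Z hZmeas hZindep t (μ (Z j0 ⁻¹' Set.Iic t))
      (hsame t) m hmM
    have hPval : P ρ
        = (μ {ω | m ≤ (Finset.univ.filter (fun j => Z j ω ≤ t)).card}).toReal := by
      rw [hP ρ, hEv ρ hρ]
    have hPub : P ρ ≤ (M.choose m : ℝ) * q ^ m := by
      rw [hPval]
      have h2 := ENNReal.toReal_mono
        (ENNReal.mul_ne_top (ENNReal.natCast_ne_top _) (ENNReal.pow_ne_top hpne)) hcomb.2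
      rwa [ENNReal.toReal_mul, ENNReal.toReal_pow, ENNReal.toReal_natCast] at h2
    have hPlb : (M.choose m : ℝ) * (q ^ m * (1 - q) ^ (M - m)) ≤ P ρ := by
      rw [hPval]
      have h2 := ENNReal.toReal_mono (measure_ne_top μ _) hcomb.1
      rwa [ENNReal.toReal_mul, ENNReal.toReal_mul, ENNReal.toReal_pow, ENNReal.toReal_pow,
        ENNReal.toReal_natCast,
        ENNReal.toReal_sub_of_le prob_le_one ENNReal.one_ne_top, ENNReal.toReal_one] at h2
    have hρK : (0:ℝ) ≤ ρ ^ K := pow_nonneg hρ.le K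
    have hρt : ρ * t = εm / δ := by
      rw [htdef]
      show ρ * (εm / (ρ * δ)) = εm / δ
      field_simp
    have hkey : ρ ^ K * (t ^ K * c0) = (εm / δ) ^ K * c0 := by
      rw [← mul_assoc, ← mul_pow, hρt]
    have hpowmul : (ρ:ℝ) ^ (m * K) = (ρ ^ K) ^ m := by
      rw [← pow_mul, mul_comm]
    have hchoosenn : (0:ℝ) ≤ (M.choose m : ℝ) := Nat.cast_nonneg _
    constructor
    · -- lower bound
      have hbase1 : Real.exp (-(t * (1 + R ^ α) / η)) * ((εm / δ) ^ K * c0)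
          ≤ ρ ^ K * q := by
        calc Real.exp (-(t * (1 + R ^ α) / η)) * ((εm / δ) ^ K * c0)
            = ρ ^ K * (Real.exp (-(t * (1 + R ^ α) / η)) * (t ^ K * c0)) := by
              rw [← hkey]; ring
          _ ≤ ρ ^ K * q := mul_le_mul_of_nonneg_left hqlow hρK
      have hbase1nn : 0 ≤ Real.exp (-(t * (1 + R ^ α) / η)) * ((εm / δ) ^ K * c0) :=
        mul_nonneg (Real.exp_nonneg _) (mul_nonneg (by positivity) hc0)
      have hbase2 : 1 - t ^ K * c0 ≤ 1 - q := by linarith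
      have hbase2nn : (0:ℝ) ≤ 1 - t ^ K * c0 := by linarith
      calc F t = (M.choose m : ℝ) *
            (Real.exp (-(t * (1 + R ^ α) / η)) * ((εm / δ) ^ K * c0)) ^ m *
            (1 - t ^ K * c0) ^ (M - m) := rfl
        _ ≤ (M.choose m : ℝ) * (ρ ^ K * q) ^ m * (1 - q) ^ (M - m) := by
            have h1 := pow_le_pow_left₀ hbase1nn hbase1 m
            have h2 := pow_le_pow_left₀ hbase2nn hbase2 (M - m)
            have h3 : (0:ℝ) ≤ (ρ ^ K * q) ^ m := pow_nonneg (mul_nonneg hρK hq0') m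
            have h4 : (0:ℝ) ≤ (1 - t ^ K * c0) ^ (M - m) := pow_nonneg hbase2nn (M - m)
            have h5 : (0:ℝ) ≤ (M.choose m : ℝ) *
                (Real.exp (-(t * (1 + R ^ α) / η)) * ((εm / δ) ^ K * c0)) ^ m :=
              mul_nonneg hchoosenn (pow_nonneg hbase1nn m)
            exact mul_le_mul (mul_le_mul_of_nonneg_left h1 hchoosenn) h2 h4
              (mul_nonneg hchoosenn h3)
        _ = ρ ^ (m * K) * ((M.choose m : ℝ) * (q ^ m * (1 - q) ^ (M - m))) := by
            rw [hpowmul, mul_pow]; ring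
        _ ≤ ρ ^ (m * K) * P ρ :=
            mul_le_mul_of_nonneg_left hPlb (by rw [hpowmul]; exact pow_nonneg hρK m)
    · -- upper bound
      have hP0 : 0 ≤ P ρ := by rw [hPval]; exact ENNReal.toReal_nonneg
      calc ρ ^ (m * K) * P ρ
          ≤ ρ ^ (m * K) * ((M.choose m : ℝ) * q ^ m) :=
            mul_le_mul_of_nonneg_left hPub (by rw [hpowmul]; exact pow_nonneg hρK m)
        _ = (M.choose m : ℝ) * (ρ ^ K * q) ^ m := by
            rw [hpowmul, mul_pow]; ring
        _ ≤ (M.choose m : ℝ) * ((εm / δ) ^ K * c0) ^ m := by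
            have hb : ρ ^ K * q ≤ (εm / δ) ^ K * c0 := by
              calc ρ ^ K * q ≤ ρ ^ K * (t ^ K * c0) :=
                    mul_le_mul_of_nonneg_left hqup hρK
                _ = (εm / δ) ^ K * c0 := hkey
            exact mul_le_mul_of_nonneg_left
              (pow_le_pow_left₀ (mul_nonneg hρK hq0') hb m) hchoosenn
        _ = L := rfl
  refine tendsto_of_tendsto_of_tendsto_of_le_of_le' hFlim tendsto_const_nhds ?_ ?_
  · filter_upwards [Filter.eventually_gt_atTop 0, hsm] with ρ hρ hsmall
    exact (hPbounds ρ hρ hsmall).1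
  · filter_upwards [Filter.eventually_gt_atTop 0, hsm] with ρ hρ hsmall
    exact (hPbounds ρ hρ hsmall).2
end
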